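/- Let Φ = [[A, B],[C, D]] be an invertible supermatrix in standard form over a supercommutative superalgebra R (A a p×p matrix and D a q×q matrix over R₀, B and C matrices over R₁, with A and D invertible). Then the Berezinian satisfies det(A)·det(D − C A^{−1} B)^{−1} = det(D)^{−1}·det(A − B D^{−1} C), i.e., the two standard formulas for ber(Φ) agree. -/

import Mathlib

open Matrix

section Super

variable {S R : Type*} [CommRing S] [Ring R] [Algebra S R]

/-- Bundled hypotheses: `O` is the odd part of a supercommutative superalgebra with
even part (the image of) `S`. -/
structure SuperData (O : Submodule S R) : Prop where
  hanti : ∀ a ∈ O, ∀ b ∈ O, a * b = -(b * a)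
  hsq : ∀ a ∈ O, a * a = 0
  hOO : ∀ a ∈ O, ∀ b ∈ O, a * b ∈ (algebraMap S R).range
  hinj : Function.Injective (algebraMap S R)

variable {O : Submodule S R}

/-- Oddness of matrices. -/
def OddM {m n : Type*} (O : Submodule S R) (M : Matrix m n R) : Prop := ∀ i j, M i j ∈ O

lemma map_matrix_inj (hinj : Function.Injective (algebraMap S R)) {m n : Type*}
    {M N : Matrix m n S} (h : M.map (algebraMap S R) = N.map (algebraMap S R)) : M = N := by
  ext i j
  exact hinj (congrFun (congrFun h i) j)

lemma oddM_evenL {m n k : Type*} [Fintype n] (N : Matrix m n S) (M : Matrix n k R)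
    (hM : OddM O M) : OddM O ((N.map (algebraMap S R)) * M) := by
  intro i j
  rw [mul_apply]
  refine Submodule.sum_mem _ fun l _ => ?_
  rw [map_apply, ← Algebra.smul_def]
  exact O.smul_mem _ (hM l j)

lemma oddM_evenR {m n k : Type*} [Fintype n] (M : Matrix m n R) (N : Matrix n k S)
    (hM : OddM O M) : OddM O (M * N.map (algebraMap S R)) := by
  intro i j
  rw [mul_apply]
  refine Submodule.sum_mem _ fun l _ => ?_
  rw [map_apply, ← Algebra.commutes, ← Algebra.smul_def]
  exact O.smul_mem _ (hM i l)

lemma oddM_mul_oddM_range (hs : SuperData O) {m n k : Type*} [Fintype n]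
    (M : Matrix m n R) (N : Matrix n k R) (hM : OddM O M) (hN : OddM O N) :
    ∀ i j, (M * N) i j ∈ (algebraMap S R).range := by
  intro i j
  rw [mul_apply]
  exact Subring.sum_mem _ fun l _ => hs.hOO _ (hM i l) _ (hN l j)

/-- A choice of preimage matrix over `S` for a matrix over `R` with entries in the
image of `S`. -/
noncomputable def evenLift {m n : Type*} (M : Matrix m n R) : Matrix m n S :=
  haveI : Nonempty S := ⟨0⟩
  M.map (Function.invFun (algebraMap S R))

lemma evenLift_spec {m n : Type*} {M : Matrix m n R}
    (hM : ∀ i j, M i j ∈ (algebraMap S R).range) :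
    (evenLift M).map (algebraMap S R) = M := by
  haveI : Nonempty S := ⟨0⟩
  ext i j
  obtain ⟨s, hs⟩ := hM i j
  exact Function.invFun_eq ⟨s, hs⟩

lemma isNilpotent_sum_sq_zero {ι : Type*} (s : Finset ι) (z : ι → R)
    (hcomm : ∀ i ∈ s, ∀ j ∈ s, Commute (z i) (z j))
    (hz : ∀ i ∈ s, z i * z i = 0) : IsNilpotent (∑ i ∈ s, z i) := by
  classical
  induction s using Finset.induction_on with
  | empty => simp
  | @insert a s ha ih =>
    rw [Finset.sum_insert ha]
    refine Commute.isNilpotent_add ?_ ?_ ?_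
    · exact Commute.sum_right _ _ _ fun i hi =>
        hcomm a (Finset.mem_insert_self a s) i (Finset.mem_insert_of_mem hi)
    · exact ⟨2, by rw [sq]; exact hz a (Finset.mem_insert_self a s)⟩
    · exact ih (fun i hi j hj => hcomm i (Finset.mem_insert_of_mem hi) j
        (Finset.mem_insert_of_mem hj))
        (fun i hi => hz i (Finset.mem_insert_of_mem hi))

lemma prod_odd_sq_zero (hs : SuperData O) {a b : R} (ha : a ∈ O) (hb : b ∈ O) :
    (a * b) * (a * b) = 0 := by
  have h1 : b * a = -(a * b) := hs.hanti b hb a ha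
  calc (a * b) * (a * b) = a * (b * a) * b := by noncomm_ring
    _ = a * (-(a * b)) * b := by rw [h1]
    _ = -((a * a) * (b * b)) := by noncomm_ring
    _ = 0 := by rw [hs.hsq a ha]; simp

lemma range_comm {x : R} (hx : x ∈ (algebraMap S R).range) (r : R) : Commute x r := by
  obtain ⟨s, rfl⟩ := hx
  exact Algebra.commutes s r

lemma entries_nilpotent (hs : SuperData O) {m n : Type*} [Fintype n]
    (X : Matrix m n R) (Y : Matrix n m R) (hX : OddM O X) (hY : OddM O Y)
    (U : Matrix m m S) (hU : U.map (algebraMap S R) = X * Y) :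
    ∀ i j, IsNilpotent (U i j) := by
  intro i j
  have hf : algebraMap S R (U i j) = ∑ k, X i k * Y k j := by
    have := congrFun (congrFun hU i) j
    simpa [mul_apply] using this
  have hnil : IsNilpotent (algebraMap S R (U i j)) := by
    rw [hf]
    refine isNilpotent_sum_sq_zero _ _ (fun k _ l _ => ?_) (fun k _ => ?_)
    · exact range_comm (hs.hOO _ (hX i k) _ (hY k j)) _
    · exact prod_odd_sq_zero hs (hX i k) (hY k j)
  obtain ⟨e, he⟩ := hnil
  exact ⟨e, hs.hinj (by rw [map_pow, he, map_zero])⟩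

lemma isUnit_det_one_sub_nil {m : Type*} [Fintype m] [DecidableEq m]
    (U : Matrix m m S) (h : ∀ i j, IsNilpotent (U i j)) :
    IsUnit (1 - U : Matrix m m S).det := by
  set π := Ideal.Quotient.mk (nilradical S)
  have hmap : (1 - U).map π = 1 := by
    have hU0 : U.map π = 0 := by
      ext i j
      simpa [map_apply, π, Ideal.Quotient.eq_zero_iff_mem, mem_nilradical] using h i j
    have : (1 - U).map π = (1 : Matrix m m S).map π - U.map π :=
      Matrix.map_sub π (fun a b => map_sub π a b) _ _
    rw [this, hU0, Matrix.map_one π (map_zero π) (map_one π), sub_zero]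
  have hdet : π ((1 - U).det) = 1 := by
    rw [RingHom.map_det, RingHom.mapMatrix_apply, hmap, det_one]
  have hnil : IsNilpotent (1 - (1 - U).det) := by
    rw [← mem_nilradical, ← Ideal.Quotient.eq_zero_iff_mem]
    change π _ = 0
    rw [_root_.map_sub, hdet, _root_.map_one, sub_self]
  simpa using hnil.isUnit_one_sub

/-- The core property: for odd rectangular matrices `X`, `Y`, the determinants of
(preimages over `S` of) `1 - X*Y` and `1 - Y*X` are mutually inverse. -/
def CoreProp (O : Submodule S R) (m n : Type*) [Fintype m] [Fintype n]
    [DecidableEq m] [DecidableEq n] : Prop :=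
  ∀ (X : Matrix m n R) (Y : Matrix n m R), OddM O X → OddM O Y →
  ∀ (U : Matrix m m S) (V : Matrix n n S),
    U.map (algebraMap S R) = X * Y → V.map (algebraMap S R) = Y * X →
    (1 - U).det * (1 - V).det = 1

lemma coreProp_symm {m n : Type*} [Fintype m] [Fintype n] [DecidableEq m] [DecidableEq n]
    (h : CoreProp O m n) : CoreProp O n m := by
  intro X Y hX hY U V hU hV
  rw [mul_comm]
  exact h Y X hY hX V U hV hU

lemma coreProp_empty {m n : Type*} [Fintype m] [Fintype n] [DecidableEq m] [DecidableEq n]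
    [IsEmpty n] (hinj : Function.Injective (algebraMap S R)) : CoreProp O m n := by
  intro X Y hX hY U V hU hV
  have hXY : X * Y = 0 := by
    ext i j
    simp [mul_apply]
  have hU0 : U = 0 := map_matrix_inj hinj (by
    rw [hU, hXY]
    ext i j
    simp)
  rw [hU0, sub_zero, det_one, one_mul, det_isEmpty]

lemma coreProp_equiv_right {m n n' : Type*} [Fintype m] [Fintype n] [Fintype n']
    [DecidableEq m] [DecidableEq n] [DecidableEq n'] (e : n ≃ n')
    (h : CoreProp O m n) : CoreProp O m n' := by
  intro X Y hX hY U V hU hV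
  have hmain := h (X.submatrix id ⇑e) (Y.submatrix ⇑e id)
    (fun i j => hX i (e j)) (fun i j => hY (e i) j)
    U (V.submatrix ⇑e ⇑e) ?_ ?_
  · rw [← hmain]
    congr 1
    have h2 : (1 - V).submatrix ⇑e ⇑e = 1 - V.submatrix ⇑e ⇑e := by
      ext i j
      simp [Matrix.sub_apply, Matrix.one_apply, Equiv.apply_eq_iff_eq]
    rw [← h2, det_submatrix_equiv_self]
  · rw [hU, submatrix_mul_equiv X Y id e id, submatrix_id_id]
  · rw [← submatrix_map, hV]
    have h3 := submatrix_mul_equiv Y X ⇑e (Equiv.refl m) ⇑e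
    simpa using h3.symm

lemma map_one_sub {m : Type*} [Fintype m] [DecidableEq m] (M : Matrix m m S) :
    ((1 - M).map (algebraMap S R)) = 1 - M.map (algebraMap S R) := by
  rw [Matrix.map_sub _ (fun a b => map_sub _ a b),
    Matrix.map_one _ (_root_.map_zero _) (_root_.map_one _)]

lemma coreProp_unit_unit (hs : SuperData O) : CoreProp O Unit Unit := by
  intro X Y hX hY U V hU hV
  set x := X () () with hx
  set y := Y () () with hy
  have hfU : algebraMap S R (U () ()) = x * y := by
    have := congrFun (congrFun hU ()) ()
    simpa [mul_apply] using this
  have hfV : algebraMap S R (V () ()) = y * x := by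
    have := congrFun (congrFun hV ()) ()
    simpa [mul_apply] using this
  have hdU : (1 - U).det = 1 - U () () := by
    rw [det_unique]; simp
  have hdV : (1 - V).det = 1 - V () () := by
    rw [det_unique]; simp
  rw [hdU, hdV]
  apply hs.hinj
  rw [_root_.map_mul, _root_.map_sub, _root_.map_sub, _root_.map_one, hfU, hfV]
  have h1 : y * x = -(x * y) := hs.hanti y (hY () ()) x (hX () ())
  have h2 : (x * y) * (y * x) = 0 := by
    rw [mul_assoc, ← mul_assoc y y x, hs.hsq y (hY () ()), zero_mul, mul_zero]
  have expand : (1 - x * y) * (1 - y * x) = 1 - x * y - y * x + (x * y) * (y * x) := by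
    noncomm_ring
  rw [expand, h2, h1]
  abel

lemma coreProp_step (hs : SuperData O) {m n : Type*} [Fintype m] [Fintype n]
    [DecidableEq m] [DecidableEq n]
    (h : CoreProp O m n) (h1 : CoreProp O m Unit) : CoreProp O m (n ⊕ Unit) := by
  intro X Y hX hY U V hU hV
  set X' := X.toCols₁ with hX'def
  set u := X.toCols₂ with hudef
  set Y' := Y.toRows₁ with hY'def
  set v := Y.toRows₂ with hvdef
  have hX' : OddM O X' := fun i j => hX i (Sum.inl j)
  have hu : OddM O u := fun i j => hX i (Sum.inr j)
  have hY' : OddM O Y' := fun i j => hY (Sum.inl i) j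
  have hv : OddM O v := fun i j => hY (Sum.inr i) j
  have hXY : X * Y = X' * Y' + u * v := by
    conv_lhs => rw [← fromCols_toCols X, ← fromRows_toRows Y]
    rw [fromCols_mul_fromRows]
  have hYX : Y * X = fromBlocks (Y' * X') (Y' * u) (v * X') (v * u) := by
    conv_lhs => rw [← fromRows_toRows Y, ← fromCols_toCols X]
    rw [fromRows_mul_fromCols]
  -- S-preimages of the even products
  set U' := evenLift (S := S) (X' * Y') with hU'def
  set V' := evenLift (S := S) (Y' * X') with hV'def
  set B₁ := evenLift (S := S) (Y' * u) with hB₁def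
  set C₁ := evenLift (S := S) (v * X') with hC₁def
  set D₁ := evenLift (S := S) (v * u) with hD₁def
  set W := evenLift (S := S) (u * v) with hWdef
  have hU's : U'.map (algebraMap S R) = X' * Y' :=
    evenLift_spec (oddM_mul_oddM_range hs _ _ hX' hY')
  have hV's : V'.map (algebraMap S R) = Y' * X' :=
    evenLift_spec (oddM_mul_oddM_range hs _ _ hY' hX')
  have hB₁s : B₁.map (algebraMap S R) = Y' * u :=
    evenLift_spec (oddM_mul_oddM_range hs _ _ hY' hu)
  have hC₁s : C₁.map (algebraMap S R) = v * X' :=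
    evenLift_spec (oddM_mul_oddM_range hs _ _ hv hX')
  have hD₁s : D₁.map (algebraMap S R) = v * u :=
    evenLift_spec (oddM_mul_oddM_range hs _ _ hv hu)
  have hWs : W.map (algebraMap S R) = u * v :=
    evenLift_spec (oddM_mul_oddM_range hs _ _ hu hv)
  have hUd : U = U' + W := by
    apply map_matrix_inj hs.hinj
    rw [hU, hXY, Matrix.map_add _ (fun a b => map_add _ a b), hU's, hWs]
  have hVd : V = fromBlocks V' B₁ C₁ D₁ := by
    apply map_matrix_inj hs.hinj
    rw [hV, hYX, fromBlocks_map, hV's, hB₁s, hC₁s, hD₁s]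
  -- nilpotency and invertibility
  have hMu : IsUnit (1 - U' : Matrix m m S).det :=
    isUnit_det_one_sub_nil _ (entries_nilpotent hs X' Y' hX' hY' U' hU's)
  have hMv : IsUnit (1 - V' : Matrix n n S).det :=
    isUnit_det_one_sub_nil _ (entries_nilpotent hs Y' X' hY' hX' V' hV's)
  have hIH : (1 - U').det * (1 - V').det = 1 := h X' Y' hX' hY' U' V' hU's hV's
  -- inverses in R
  set Nmat := ((1 - U')⁻¹).map (algebraMap S R) with hNdef
  set N₂ := ((1 - V')⁻¹).map (algebraMap S R) with hN₂def
  have hM'f : (1 - U').map (algebraMap S R) = 1 - X' * Y' := by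
    rw [map_one_sub, hU's]
  have hM₂f : (1 - V').map (algebraMap S R) = 1 - Y' * X' := by
    rw [map_one_sub, hV's]
  have hNr : Nmat * (1 - X' * Y') = 1 := by
    rw [← hM'f, hNdef, ← Matrix.map_mul, nonsing_inv_mul _ hMu,
      Matrix.map_one _ (_root_.map_zero _) (_root_.map_one _)]
  have hN₂l : (1 - Y' * X') * N₂ = 1 := by
    rw [← hM₂f, hN₂def, ← Matrix.map_mul, mul_nonsing_inv _ hMv,
      Matrix.map_one _ (_root_.map_zero _) (_root_.map_one _)]
  have e1 : (Y' * X') * N₂ = N₂ - 1 := by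
    have h' : N₂ - (Y' * X') * N₂ = 1 := by
      calc N₂ - (Y' * X') * N₂ = (1 - Y' * X') * N₂ := by
            rw [Matrix.sub_mul, Matrix.one_mul]
        _ = 1 := hN₂l
    have h'' : N₂ = 1 + (Y' * X') * N₂ := sub_eq_iff_eq_add.mp h'
    exact eq_sub_of_add_eq (by rw [add_comm]; exact h''.symm)
  have key : (1 - X' * Y') * (1 + X' * (N₂ * Y')) = 1 := by
    have expand : (1 - X' * Y') * (1 + X' * (N₂ * Y')) =
        1 + X' * (N₂ * Y') - X' * Y' - X' * (((Y' * X') * N₂) * Y') := by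
      simp only [Matrix.mul_add, Matrix.add_mul, Matrix.sub_mul, Matrix.mul_sub,
        Matrix.one_mul, Matrix.mul_one, Matrix.mul_assoc]
      abel
    rw [expand, e1]
    simp only [Matrix.sub_mul, Matrix.mul_sub, Matrix.one_mul, Matrix.mul_one,
      Matrix.mul_add, Matrix.add_mul]
    abel
  have push : Nmat = 1 + X' * (N₂ * Y') := by
    calc Nmat = Nmat * ((1 - X' * Y') * (1 + X' * (N₂ * Y'))) := by
          rw [key, Matrix.mul_one]
      _ = (Nmat * (1 - X' * Y')) * (1 + X' * (N₂ * Y')) := by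
          rw [Matrix.mul_assoc]
      _ = 1 + X' * (N₂ * Y') := by rw [hNr, Matrix.one_mul]
  -- the rank-one part
  set X₁ := Nmat * u with hX₁def
  have hX₁ : OddM O X₁ := oddM_evenL _ _ hu
  set U₁ := (1 - U')⁻¹ * W with hU₁def
  have hU₁s : U₁.map (algebraMap S R) = X₁ * v := by
    rw [hU₁def, Matrix.map_mul, hWs, hX₁def, Matrix.mul_assoc]
  set V₁ := evenLift (S := S) (v * X₁) with hV₁def
  have hV₁s : V₁.map (algebraMap S R) = v * X₁ :=
    evenLift_spec (oddM_mul_oddM_range hs _ _ hv hX₁)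
  have hcore1 : (1 - U₁).det * (1 - V₁).det = 1 := h1 X₁ v hX₁ hv U₁ V₁ hU₁s hV₁s
  -- factor det (1 - U)
  have hfacU : (1 : Matrix m m S) - U = (1 - U') * (1 - U₁) := by
    have : (1 - U') * (1 - U₁) = (1 - U') - (1 - U') * ((1 - U')⁻¹ * W) := by
      rw [Matrix.mul_sub, Matrix.mul_one]
    rw [this, ← Matrix.mul_assoc, mul_nonsing_inv _ hMu, Matrix.one_mul, hUd, sub_sub]
  have hdetU : (1 - U).det = (1 - U').det * (1 - U₁).det := by
    rw [hfacU, det_mul]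
  -- factor det (1 - V)
  haveI : Invertible (1 - V' : Matrix n n S) := (1 - V').invertibleOfIsUnitDet hMv
  have hVblocks : (1 : Matrix (n ⊕ Unit) (n ⊕ Unit) S) - V =
      fromBlocks (1 - V') (-B₁) (-C₁) (1 - D₁) := by
    rw [hVd, ← fromBlocks_one, sub_eq_add_neg, fromBlocks_neg, fromBlocks_add]
    congr 1 <;> abel_nf
  have hdetV : (1 - V).det = (1 - V').det * ((1 - D₁) - (-C₁) * ⅟(1 - V') * (-B₁)).det := by
    rw [hVblocks, det_fromBlocks₁₁]
  have hschur : (1 - D₁) - (-C₁) * ⅟(1 - V') * (-B₁) = 1 - V₁ := by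
    rw [invOf_eq_nonsing_inv]
    simp only [Matrix.neg_mul, Matrix.mul_neg, neg_neg]
    apply map_matrix_inj hs.hinj
    rw [Matrix.map_sub _ (fun a b => map_sub _ a b), map_one_sub, map_one_sub,
      Matrix.map_mul, Matrix.map_mul, hD₁s, hC₁s, hB₁s, ← hN₂def, hV₁s]
    rw [hX₁def, push]
    have hv2 : v * ((1 + X' * (N₂ * Y')) * u) = v * u + v * X' * N₂ * (Y' * u) := by
      simp only [Matrix.mul_add, Matrix.add_mul, Matrix.one_mul, Matrix.mul_one,
        Matrix.mul_assoc]
    rw [hv2]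
    abel
  rw [hdetU, hdetV, hschur]
  calc (1 - U').det * (1 - U₁).det * ((1 - V').det * (1 - V₁).det)
      = ((1 - U').det * (1 - V').det) * ((1 - U₁).det * (1 - V₁).det) := by ring
    _ = 1 := by rw [hIH, hcore1, one_mul]

lemma coreProp_unit_fin (hs : SuperData O) : ∀ q : ℕ, CoreProp O Unit (Fin q) := by
  intro q
  induction q with
  | zero => exact coreProp_empty hs.hinj
  | succ q ih =>
    have hstep := coreProp_step hs ih (coreProp_unit_unit hs)
    exact coreProp_equiv_right
      ((Equiv.sumCongr (Equiv.refl (Fin q)) (Equiv.ofUnique Unit (Fin 1))).trans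
        finSumFinEquiv) hstep

lemma coreProp_fin_fin (hs : SuperData O) (p q : ℕ) : CoreProp O (Fin p) (Fin q) := by
  induction q with
  | zero => exact coreProp_empty hs.hinj
  | succ q ih =>
    have h1 : CoreProp O (Fin p) Unit := coreProp_symm (coreProp_unit_fin hs p)
    have hstep := coreProp_step hs ih h1
    exact coreProp_equiv_right
      ((Equiv.sumCongr (Equiv.refl (Fin q)) (Equiv.ofUnique Unit (Fin 1))).trans
        finSumFinEquiv) hstep

end Super

theorem berezinian_two_formulas_agree (S R : Type*) [CommRing S] [Ring R] [Algebra S R]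
    (O : Submodule S R)
    (hanti : ∀ a ∈ O, ∀ b ∈ O, a * b = -(b * a))
    (hsq : ∀ a ∈ O, a * a = 0)
    (hOO : ∀ a ∈ O, ∀ b ∈ O, a * b ∈ (algebraMap S R).range)
    (hinj : Function.Injective (algebraMap S R))
    (p q : ℕ)
    (A : Matrix (Fin p) (Fin p) S) (D : Matrix (Fin q) (Fin q) S)
    (Bm : Matrix (Fin p) (Fin q) R) (Cm : Matrix (Fin q) (Fin p) R)
    (hB : ∀ i j, Bm i j ∈ O) (hC : ∀ i j, Cm i j ∈ O)
    (hA : IsUnit A.det) (hD : IsUnit D.det)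
    (Q : Matrix (Fin q) (Fin q) S) (P : Matrix (Fin p) (Fin p) S)
    (hQ : Q.map (algebraMap S R) = Cm * (A⁻¹).map (algebraMap S R) * Bm)
    (hP : P.map (algebraMap S R) = Bm * (D⁻¹).map (algebraMap S R) * Cm)
    (hDQ : IsUnit (D - Q).det) (hAP : IsUnit (A - P).det) :
    A.det * Ring.inverse (D - Q).det = Ring.inverse D.det * (A - P).det := by
  have hs : SuperData O := ⟨hanti, hsq, hOO, hinj⟩
  set X : Matrix (Fin p) (Fin q) R := (A⁻¹).map (algebraMap S R) * Bm * (D⁻¹).map (algebraMap S R)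
    with hXdef
  have hXodd : OddM O X := oddM_evenR _ _ (oddM_evenL _ _ hB)
  have hYodd : OddM O Cm := hC
  set U : Matrix (Fin p) (Fin p) S := A⁻¹ * P with hUdef
  set V : Matrix (Fin q) (Fin q) S := Q * D⁻¹ with hVdef
  have hUs : U.map (algebraMap S R) = X * Cm := by
    rw [hUdef, Matrix.map_mul, hP, hXdef]
    simp only [Matrix.mul_assoc]
  have hVs : V.map (algebraMap S R) = Cm * X := by
    rw [hVdef, Matrix.map_mul, hQ, hXdef]
    simp only [Matrix.mul_assoc]
  have hcore := coreProp_fin_fin hs p q X Cm hXodd hYodd U V hUs hVs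
  have hAPfac : A - P = A * (1 - U) := by
    rw [hUdef, Matrix.mul_sub, Matrix.mul_one, ← Matrix.mul_assoc, mul_nonsing_inv _ hA,
      Matrix.one_mul]
  have hDQfac : D - Q = (1 - V) * D := by
    rw [hVdef, Matrix.sub_mul, Matrix.one_mul, Matrix.mul_assoc, nonsing_inv_mul _ hD,
      Matrix.mul_one]
  have hdAP : (A - P).det = A.det * (1 - U).det := by rw [hAPfac, det_mul]
  have hdDQ : (D - Q).det = (1 - V).det * D.det := by rw [hDQfac, det_mul]
  have hx : IsUnit ((D - Q).det * D.det) := hDQ.mul hD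
  apply hx.mul_left_cancel
  have lhs : (D - Q).det * D.det * (A.det * Ring.inverse (D - Q).det) =
      D.det * A.det * ((D - Q).det * Ring.inverse (D - Q).det) := by ring
  have rhs : (D - Q).det * D.det * (Ring.inverse D.det * (A - P).det) =
      (D - Q).det * (A - P).det * (D.det * Ring.inverse D.det) := by ring
  rw [lhs, rhs, Ring.mul_inverse_cancel _ hDQ, Ring.mul_inverse_cancel _ hD, mul_one, mul_one,
    hdAP, hdDQ]
  calc D.det * A.det = D.det * A.det * ((1 - U).det * (1 - V).det) := by rw [hcore, mul_one]
    _ = (1 - V).det * D.det * (A.det * (1 - U).det) := by ring
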